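/- Let q > 0 and let γ, α assign positive real values to finite subsets of ℕ, and let C', C'' > 0 be constants such that: (i) for every finite ω ⊆ ℕ, ∑_{ω̂ ⊇ ω} q^{|ω̂|} α(ω̂) ≤ C' q^{|ω|} α(ω), where the (unordered, [0,∞]-valued) sum runs over all finite supersets ω̂ of ω; and (ii) for every finite ω ⊆ ℕ, ∑_{ω' ⊆ ω} α(ω')/γ(ω') ≤ C'' α(ω)/γ(ω). Then for every family x of elements of [0,∞] indexed by the finite subsets of ℕ, ∑_{ω} γ(ω)⁻¹ ( ∑_{ω̂ ⊇ ω} q^{(|ω̂|−|ω|)/2} x(ω̂) )² ≤ C' C'' ∑_{ω̂} γ(ω̂)⁻¹ x(ω̂)², where the outer sums run over all finite subsets of ℕ. -/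

import Mathlib

open scoped ENNReal

lemma ennreal_rpow_two (a : ℝ≥0∞) : a ^ (2:ℝ) = a ^ 2 := by
  rw [show (2:ℝ) = ((2:ℕ):ℝ) by norm_num, ENNReal.rpow_natCast]

lemma ennreal_cauchy_schwarz {ι : Type*} (f g : ι → ℝ≥0∞) :
    (∑' i, f i * g i) ^ 2 ≤ (∑' i, f i ^ 2) * (∑' i, g i ^ 2) := by
  have hconj : (2:ℝ).HolderConjugate 2 := by
    rw [Real.holderConjugate_iff]; norm_num
  have sq : ∀ a : ℝ≥0∞, (a ^ (1/2:ℝ)) ^ 2 = a := fun a => by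
    rw [← ennreal_rpow_two, ← ENNReal.rpow_mul]; norm_num
  have h : ∑' i, f i * g i ≤
      (∑' i, f i ^ 2) ^ (1/2:ℝ) * (∑' i, g i ^ 2) ^ (1/2:ℝ) := by
    rw [ENNReal.tsum_eq_iSup_sum]
    refine iSup_le fun s => ?_
    calc ∑ i ∈ s, f i * g i
        ≤ (∑ i ∈ s, f i ^ (2:ℝ)) ^ (1/(2:ℝ)) * (∑ i ∈ s, g i ^ (2:ℝ)) ^ (1/(2:ℝ)) :=
          ENNReal.inner_le_Lp_mul_Lq s f g hconj
      _ ≤ _ := by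
          simp only [ennreal_rpow_two]
          gcongr <;> exact ENNReal.sum_le_tsum s
  calc (∑' i, f i * g i) ^ 2
      ≤ ((∑' i, f i ^ 2) ^ (1/2:ℝ) * (∑' i, g i ^ 2) ^ (1/2:ℝ)) ^ 2 := by gcongr
    _ = _ := by rw [mul_pow, sq, sq]

lemma fubini_super {G : Finset ℕ → Finset ℕ → ℝ≥0∞} :
    ∑' ω : Finset ℕ, ∑' σ : {σ : Finset ℕ // ω ⊆ σ}, G ω σ
      = ∑' σ : Finset ℕ, ∑ ω ∈ σ.powerset, G ω σ := by
  rw [← ENNReal.tsum_sigma (fun ω (σ : {σ : Finset ℕ // ω ⊆ σ}) => G ω σ)]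
  let e : (Σ ω : Finset ℕ, {σ : Finset ℕ // ω ⊆ σ}) ≃
      (Σ σ : Finset ℕ, {ω : Finset ℕ // ω ∈ σ.powerset}) :=
    { toFun := fun p => ⟨p.2.1, p.1, Finset.mem_powerset.2 p.2.2⟩
      invFun := fun p => ⟨p.2.1, p.1, Finset.mem_powerset.1 p.2.2⟩
      left_inv := fun p => rfl
      right_inv := fun p => rfl }
  calc ∑' p : (Σ ω : Finset ℕ, {σ : Finset ℕ // ω ⊆ σ}), G p.1 p.2.1
      = ∑' p : (Σ ω : Finset ℕ, {σ : Finset ℕ // ω ⊆ σ}),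
          (fun r : (Σ σ : Finset ℕ, {ω : Finset ℕ // ω ∈ σ.powerset}) => G r.2.1 r.1) (e p) :=
        tsum_congr fun p => rfl
    _ = ∑' r : (Σ σ : Finset ℕ, {ω : Finset ℕ // ω ∈ σ.powerset}), G r.2.1 r.1 :=
        e.tsum_eq (fun r => G r.2.1 r.1)
    _ = _ := by
        rw [ENNReal.tsum_sigma (fun σ (ω : {ω : Finset ℕ // ω ∈ σ.powerset}) => G ω σ)]
        exact tsum_congr fun σ => by
          simpa using (Finset.tsum_subtype σ.powerset (fun ω => G ω σ))
open scoped ENNReal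

/-- core estimate in the proof of Proposition 5.
Let `q > 0`, let `γ, α` assign positive reals to finite subsets of `ℕ`, and let `C', C'' > 0`
satisfy (i) `∑_{ω̂ ⊇ ω} q^{|ω̂|} α(ω̂) ≤ C' q^{|ω|} α(ω)` and
(ii) `∑_{ω' ⊆ ω} α(ω')/γ(ω') ≤ C'' α(ω)/γ(ω)` for all finite `ω ⊆ ℕ`.  Then for every
`[0,∞]`-valued family `x` indexed by finite subsets of `ℕ`,
`∑_ω γ(ω)⁻¹ (∑_{ω̂ ⊇ ω} q^{(|ω̂|-|ω|)/2} x(ω̂))² ≤ C' C'' ∑_ω̂ γ(ω̂)⁻¹ x(ω̂)²`. -/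
theorem stmt13 (q : ℝ) (hq : 0 < q) (γ α : Finset ℕ → ℝ)
    (hγ : ∀ ω, 0 < γ ω) (hα : ∀ ω, 0 < α ω)
    (C' C'' : ℝ) (hC' : 0 < C') (hC'' : 0 < C'')
    (h1 : ∀ ω : Finset ℕ,
      ∑' σ : {σ : Finset ℕ // ω ⊆ σ},
          ENNReal.ofReal (q ^ (σ : Finset ℕ).card * α (σ : Finset ℕ)) ≤
        ENNReal.ofReal (C' * q ^ ω.card * α ω))
    (h2 : ∀ ω : Finset ℕ,
      ∑ ω' ∈ ω.powerset, α ω' / γ ω' ≤ C'' * α ω / γ ω) :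
    ∀ x : Finset ℕ → ℝ≥0∞,
      ∑' ω : Finset ℕ, ENNReal.ofReal ((γ ω)⁻¹) *
          (∑' σ : {σ : Finset ℕ // ω ⊆ σ},
            ENNReal.ofReal (q ^ ((((σ : Finset ℕ).card : ℝ) - (ω.card : ℝ)) / 2)) *
              x (σ : Finset ℕ)) ^ 2 ≤
        ENNReal.ofReal (C' * C'') *
          ∑' σ : Finset ℕ, ENNReal.ofReal ((γ σ)⁻¹) * x σ ^ 2 := by
  intro x
  have key : ∀ ω : Finset ℕ,
      (∑' σ : {σ : Finset ℕ // ω ⊆ σ},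
          ENNReal.ofReal (q ^ ((((σ : Finset ℕ).card : ℝ) - (ω.card : ℝ)) / 2)) *
            x (σ : Finset ℕ)) ^ 2 ≤
        ENNReal.ofReal (C' * α ω) *
          ∑' σ : {σ : Finset ℕ // ω ⊆ σ},
            x (σ : Finset ℕ) ^ 2 / ENNReal.ofReal (α (σ : Finset ℕ)) := by
    intro ω
    set f : {σ : Finset ℕ // ω ⊆ σ} → ℝ≥0∞ := fun σ =>
      ENNReal.ofReal (q ^ ((((σ : Finset ℕ).card : ℝ) - (ω.card : ℝ)) / 2) *
        Real.sqrt (α (σ : Finset ℕ))) with hf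
    set g : {σ : Finset ℕ // ω ⊆ σ} → ℝ≥0∞ := fun σ =>
      x (σ : Finset ℕ) / ENNReal.ofReal (Real.sqrt (α (σ : Finset ℕ))) with hg
    have hfg : ∀ σ : {σ : Finset ℕ // ω ⊆ σ},
        ENNReal.ofReal (q ^ ((((σ : Finset ℕ).card : ℝ) - (ω.card : ℝ)) / 2)) *
          x (σ : Finset ℕ) = f σ * g σ := by
      intro σ
      have hs : (0:ℝ) < Real.sqrt (α (σ : Finset ℕ)) := Real.sqrt_pos.2 (hα _)
      rw [hf, hg]
      simp only
      rw [ENNReal.ofReal_mul (Real.rpow_nonneg hq.le _), mul_assoc,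
        ENNReal.mul_div_cancel (ENNReal.ofReal_pos.2 hs).ne' ENNReal.ofReal_ne_top]
    have hf2 : ∑' σ : {σ : Finset ℕ // ω ⊆ σ}, f σ ^ 2 ≤ ENNReal.ofReal (C' * α ω) := by
      have hterm : ∀ σ : {σ : Finset ℕ // ω ⊆ σ}, f σ ^ 2 =
          (ENNReal.ofReal (q ^ ω.card))⁻¹ *
            ENNReal.ofReal (q ^ (σ : Finset ℕ).card * α (σ : Finset ℕ)) := by
        intro σ
        have hrp : (q ^ ((((σ : Finset ℕ).card : ℝ) - (ω.card : ℝ)) / 2) *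
            Real.sqrt (α (σ : Finset ℕ))) ^ 2 =
            (q ^ ω.card)⁻¹ * (q ^ (σ : Finset ℕ).card * α (σ : Finset ℕ)) := by
          rw [mul_pow, Real.sq_sqrt (hα _).le,
            ← Real.rpow_natCast (q ^ ((((σ : Finset ℕ).card : ℝ) - (ω.card : ℝ)) / 2)) 2,
            ← Real.rpow_mul hq.le]
          rw [show (((σ : Finset ℕ).card : ℝ) - (ω.card : ℝ)) / 2 * (2:ℕ)
            = ((σ : Finset ℕ).card : ℝ) - (ω.card : ℝ) by push_cast; ring]
          rw [Real.rpow_sub hq, Real.rpow_natCast, Real.rpow_natCast, div_eq_mul_inv]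
          ring
        rw [hf]
        simp only
        rw [← ENNReal.ofReal_pow (by positivity), hrp,
          ENNReal.ofReal_mul (by positivity),
          ENNReal.ofReal_inv_of_pos (by positivity)]
      rw [tsum_congr hterm, ENNReal.tsum_mul_left]
      calc (ENNReal.ofReal (q ^ ω.card))⁻¹ *
            ∑' σ : {σ : Finset ℕ // ω ⊆ σ},
              ENNReal.ofReal (q ^ (σ : Finset ℕ).card * α (σ : Finset ℕ))
          ≤ (ENNReal.ofReal (q ^ ω.card))⁻¹ * ENNReal.ofReal (C' * q ^ ω.card * α ω) :=
            mul_le_mul_right (h1 ω) _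
        _ = ENNReal.ofReal (C' * α ω) := by
            rw [show C' * q ^ ω.card * α ω = q ^ ω.card * (C' * α ω) by ring,
              ENNReal.ofReal_mul (by positivity), ← mul_assoc,
              ENNReal.inv_mul_cancel (ENNReal.ofReal_pos.2 (by positivity)).ne'
                ENNReal.ofReal_ne_top, one_mul]
    have hg2 : ∀ σ : {σ : Finset ℕ // ω ⊆ σ},
        g σ ^ 2 = x (σ : Finset ℕ) ^ 2 / ENNReal.ofReal (α (σ : Finset ℕ)) := by
      intro σ
      rw [hg]
      simp only [div_eq_mul_inv, mul_pow, ← ENNReal.inv_pow,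
        ← ENNReal.ofReal_pow (Real.sqrt_nonneg _), Real.sq_sqrt (hα _).le]
    calc (∑' σ : {σ : Finset ℕ // ω ⊆ σ},
          ENNReal.ofReal (q ^ ((((σ : Finset ℕ).card : ℝ) - (ω.card : ℝ)) / 2)) *
            x (σ : Finset ℕ)) ^ 2
        = (∑' σ : {σ : Finset ℕ // ω ⊆ σ}, f σ * g σ) ^ 2 := by rw [tsum_congr hfg]
      _ ≤ (∑' σ : {σ : Finset ℕ // ω ⊆ σ}, f σ ^ 2) *
            (∑' σ : {σ : Finset ℕ // ω ⊆ σ}, g σ ^ 2) := ennreal_cauchy_schwarz f g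
      _ ≤ _ := mul_le_mul' hf2 (le_of_eq (tsum_congr hg2))
  calc ∑' ω : Finset ℕ, ENNReal.ofReal ((γ ω)⁻¹) *
          (∑' σ : {σ : Finset ℕ // ω ⊆ σ},
            ENNReal.ofReal (q ^ ((((σ : Finset ℕ).card : ℝ) - (ω.card : ℝ)) / 2)) *
              x (σ : Finset ℕ)) ^ 2
      ≤ ∑' ω : Finset ℕ, ENNReal.ofReal ((γ ω)⁻¹) * (ENNReal.ofReal (C' * α ω) *
          ∑' σ : {σ : Finset ℕ // ω ⊆ σ},
            x (σ : Finset ℕ) ^ 2 / ENNReal.ofReal (α (σ : Finset ℕ))) :=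
        ENNReal.tsum_le_tsum fun ω => mul_le_mul_right (key ω) _
    _ = ENNReal.ofReal C' * ∑' ω : Finset ℕ, ∑' σ : {σ : Finset ℕ // ω ⊆ σ},
          ENNReal.ofReal (α ω / γ ω) *
            (x (σ : Finset ℕ) ^ 2 / ENNReal.ofReal (α (σ : Finset ℕ))) := by
        rw [← ENNReal.tsum_mul_left]
        refine tsum_congr fun ω => ?_
        rw [ENNReal.tsum_mul_left, ← mul_assoc, ← mul_assoc]
        congr 1
        rw [← ENNReal.ofReal_mul (inv_nonneg.2 (hγ ω).le), ← ENNReal.ofReal_mul hC'.le]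
        congr 1
        rw [div_eq_mul_inv]; ring
    _ = ENNReal.ofReal C' * ∑' σ : Finset ℕ, ∑ ω ∈ σ.powerset,
          ENNReal.ofReal (α ω / γ ω) * (x σ ^ 2 / ENNReal.ofReal (α σ)) := by
        rw [fubini_super (G := fun ω σ =>
          ENNReal.ofReal (α ω / γ ω) * (x σ ^ 2 / ENNReal.ofReal (α σ)))]
    _ ≤ ENNReal.ofReal C' * ∑' σ : Finset ℕ,
          ENNReal.ofReal C'' * (ENNReal.ofReal ((γ σ)⁻¹) * x σ ^ 2) := by
        gcongr with σ
        calc ∑ ω ∈ σ.powerset,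
              ENNReal.ofReal (α ω / γ ω) * (x σ ^ 2 / ENNReal.ofReal (α σ))
            = ENNReal.ofReal (∑ ω ∈ σ.powerset, α ω / γ ω) *
                (x σ ^ 2 / ENNReal.ofReal (α σ)) := by
              rw [ENNReal.ofReal_sum_of_nonneg
                (fun ω _ => div_nonneg (hα ω).le (hγ ω).le), Finset.sum_mul]
          _ ≤ ENNReal.ofReal (C'' * α σ / γ σ) * (x σ ^ 2 / ENNReal.ofReal (α σ)) := by
              gcongr
              exact h2 σ
          _ = ENNReal.ofReal C'' * (ENNReal.ofReal ((γ σ)⁻¹) * x σ ^ 2) := by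
              rw [show C'' * α σ / γ σ = C'' * (γ σ)⁻¹ * α σ by rw [div_eq_mul_inv]; ring,
                ENNReal.ofReal_mul (mul_nonneg hC''.le (inv_nonneg.2 (hγ σ).le)),
                ENNReal.ofReal_mul hC''.le,
                mul_assoc (ENNReal.ofReal C'' * ENNReal.ofReal ((γ σ)⁻¹)),
                ENNReal.mul_div_cancel (ENNReal.ofReal_pos.2 (hα σ)).ne'
                  ENNReal.ofReal_ne_top, mul_assoc]
    _ = ENNReal.ofReal (C' * C'') *
          ∑' σ : Finset ℕ, ENNReal.ofReal ((γ σ)⁻¹) * x σ ^ 2 := by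
        rw [ENNReal.tsum_mul_left, ← mul_assoc, ← ENNReal.ofReal_mul hC'.le]
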